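/- Let X = ⨆_λ G_λ be a multiple group rack, Y an X-set, and define C_n(X)_Y as the free abelian group on tuples ⟨υ⟩⟨x_{1,1},…,x_{1,n₁}⟩⋯⟨x_{k,1},…,x_{k,n_k}⟩ with n₁+⋯+n_k = n and each block of entries from a single group G_λ, with the boundary homomorphism ∂_n defined via the operators ∂̃ as in the MGR chain complex. Then ∂_{n-1} ∘ ∂_n = 0, so (C_n(X)_Y, ∂_n) is a chain complex. -/

import Mathlib

/-- A multiple group rack `X = ⨆_{λ∈Λ} G_λ`, encoded by its underlying set
`X`, the fiber projection `p : X → Λ`, a fiberwise group structure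
(`mul`, `one`, `inv`, with axioms imposed only within a fiber) and the rack
operation `op`. -/
structure MGRData (X : Type*) (Λ : Type*) where
  p : X → Λ
  mul : X → X → X
  one : Λ → X
  inv : X → X
  op : X → X → X
  p_one : ∀ l, p (one l) = l
  p_mul : ∀ x y, p x = p y → p (mul x y) = p x
  p_inv : ∀ x, p (inv x) = p x
  mul_assoc : ∀ x y z, p x = p y → p y = p z →
    mul (mul x y) z = mul x (mul y z)
  mul_one : ∀ x, mul x (one (p x)) = x
  one_mul : ∀ x, mul (one (p x)) x = x
  mul_inv : ∀ x, mul x (inv x) = one (p x)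
  op_mulr : ∀ x y₁ y₂, p y₁ = p y₂ → op x (mul y₁ y₂) = op (op x y₁) y₂
  op_oner : ∀ x l, op x (one l) = x
  dist : ∀ x y z, op (op x y) z = op (op x z) (op y z)
  p_op : ∀ x₁ x₂ y, p x₁ = p x₂ → p (op x₁ y) = p (op x₂ y)
  mul_op : ∀ x₁ x₂ y, p x₁ = p x₂ → op (mul x₁ x₂) y = mul (op x₁ y) (op x₂ y)

/-- An `X`-set for an MGR `X`. -/
structure MGRSet {X Λ : Type*} (M : MGRData X Λ) (Y : Type*) where
  act : Y → X → Y
  act_one : ∀ (υ : Y) (l : Λ), act υ (M.one l) = υ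
  act_mul : ∀ (υ : Y) (x₁ x₂ : X), M.p x₁ = M.p x₂ →
    act υ (M.mul x₁ x₂) = act (act υ x₁) x₂
  act_op : ∀ (υ : Y) (x y : X), act (act υ x) y = act (act υ y) (M.op x y)

section
variable {X Λ Y : Type*} (M : MGRData X Λ) (S : MGRSet M Y) (d : X)

/-- A generator `⟨υ⟩⟨x₁⟩⋯⟨x_k⟩` of the MGR chain complex, encoded as a point
of `Y` together with a list of blocks (lists) of elements of `X`; empty blocks
`⟨⟩` are deleted. -/
noncomputable def mgen (υ : Y) (L : List (List X)) : (Y × List (List X)) →₀ ℤ :=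
  Finsupp.single (υ, L.filter (fun b => !b.isEmpty)) 1

/-- The contribution `±⟨υ⟩⟨x₁⟩⋯∂̃⟨x_i⟩⋯⟨x_k⟩` of one block: `∂̃⟨x⟩ =
`*x₁⟨x⁰⟩ + Σ_{i=1}^m (−1)^i ⟨x^i⟩`, where `*x₁` acts by `op`/`act` on
everything to its left. `d` is a default element used only out of range. -/
noncomputable def blockBdry (υ : Y) (pre : List (List X)) (xs : List X)
    (post : List (List X)) : (Y × List (List X)) →₀ ℤ :=
  if xs.isEmpty then 0 else
    mgen (S.act υ (xs.headD d))
        (pre.map (List.map (fun z => M.op z (xs.headD d))) ++ (xs.tail :: post))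
      + ∑ j ∈ Finset.range xs.length, ((-1 : ℤ) ^ (j + 1)) •
          mgen υ (pre ++
            ((if j + 1 < xs.length then
                xs.take j ++ [M.mul (xs.getD j d) (xs.getD (j + 1) d)]
                  ++ xs.drop (j + 2)
              else xs.dropLast) :: post))

/-- The boundary `∂` of a generator. -/
noncomputable def mbdryGen (υ : Y) (L : List (List X)) : (Y × List (List X)) →₀ ℤ :=
  ∑ i ∈ Finset.range L.length,
    ((-1 : ℤ) ^ (((L.take i).map List.length).sum)) •
      blockBdry M S d υ (L.take i) (L.getD i []) (L.drop (i + 1))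

/-- The boundary homomorphism of the MGR chain complex, extended linearly. -/
noncomputable def mbdry (f : (Y × List (List X)) →₀ ℤ) : (Y × List (List X)) →₀ ℤ :=
  f.sum fun q c => c • mbdryGen M S d q.1 q.2

/-- A valid generator: every block is non-empty and lies in a single fiber. -/
def validL (L : List (List X)) : Prop :=
  ∀ b ∈ L, b ≠ [] ∧ ∀ x ∈ b, ∀ y ∈ b, M.p x = M.p y

end


namespace MGRAux

set_option autoImplicit false

section Lists
variable {X Λ : Type*} (M : MGRData X Λ) (d : X)

/-- merge faces of a block, recursively -/
def dmul (M : MGRData X Λ) : ℕ → List X → List X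
  | _, [] => []
  | 0, [_] => []
  | 0, x :: y :: t => M.mul x y :: t
  | n+1, x :: t => x :: dmul M n t

@[simp] lemma dmul_nil (n : ℕ) : dmul M n ([] : List X) = [] := by cases n <;> rfl

@[simp] lemma dmul_zero_single (x : X) : dmul M 0 [x] = [] := rfl

@[simp] lemma dmul_zero_cons (x y : X) (t : List X) :
    dmul M 0 (x :: y :: t) = M.mul x y :: t := rfl

@[simp] lemma dmul_succ_cons (n : ℕ) (x : X) (t : List X) :
    dmul M (n+1) (x :: t) = x :: dmul M n t := by simp [dmul]

lemma dmul_eq (b : List X) (j : ℕ) (hj : j < b.length) :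
    (if j + 1 < b.length then
        b.take j ++ [M.mul (b.getD j d) (b.getD (j + 1) d)] ++ b.drop (j + 2)
      else b.dropLast) = dmul M j b := by
  induction b generalizing j with
  | nil => simp at hj
  | cons x t ih =>
    cases j with
    | zero =>
      cases t with
      | nil => simp
      | cons y t' => simp [List.getD]
    | succ j' =>
      have hj' : j' < t.length := by simpa using hj
      rw [show dmul M (j'+1) (x::t) = x :: dmul M j' t from dmul_succ_cons M j' x t, ← ih j' hj']
      by_cases h : j' + 1 < t.length
      · rw [if_pos h, if_pos (by simpa using h)]
        simp [List.getD_cons_succ, List.take_succ_cons,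
          show j'+1+1 = (j'+1)+1 from rfl, show j'+1+2 = (j'+2)+1 from by omega,
          List.drop_succ_cons]
      · rw [if_neg h, if_neg (by simpa using h)]
        cases t with
        | nil => simp at hj'
        | cons y t' => simp

lemma dmul_length (b : List X) (j : ℕ) (hj : j < b.length) :
    (dmul M j b).length = b.length - 1 := by
  induction b generalizing j with
  | nil => simp at hj
  | cons x t ih =>
    cases j with
    | zero =>
      cases t with
      | nil => simp
      | cons y t' => simp
    | succ j' =>
      have hj' : j' < t.length := by simpa using hj
      have h2 := ih j' hj'
      simp only [dmul_succ_cons, List.length_cons, h2]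
      omega

lemma dmul_headD (b : List X) (j : ℕ) (hb : b ≠ []) :
    (dmul M (j+1) b).headD d = b.headD d := by
  cases b with
  | nil => simp at hb
  | cons x t => simp

lemma dmul_tail (b : List X) (j : ℕ) :
    dmul M j b.tail = (dmul M (j+1) b).tail := by
  cases b with
  | nil => simp
  | cons x t => simp

lemma dmul_tail0 (b : List X) : (dmul M 0 b).tail = b.tail.tail := by
  match b with
  | [] => rfl
  | [x] => rfl
  | x :: y :: t => rfl

lemma dmul_map (f : X → X)
    (hf : ∀ x y, M.p x = M.p y → f (M.mul x y) = M.mul (f x) (f y))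
    (b : List X) (hb : ∀ x ∈ b, ∀ y ∈ b, M.p x = M.p y) (j : ℕ) :
    dmul M j (b.map f) = (dmul M j b).map f := by
  induction b generalizing j with
  | nil => simp
  | cons x t ih =>
    cases j with
    | zero =>
      cases t with
      | nil => rfl
      | cons y t' =>
        have hxy : M.p x = M.p y := hb x (by simp) y (by simp)
        simp [hf x y hxy]
    | succ j' =>
      have ht : ∀ a ∈ t, ∀ b' ∈ t, M.p a = M.p b' := fun a ha b' hb' =>
        hb a (by simp [ha]) b' (by simp [hb'])
      simp [ih ht]

lemma dmul_dmul (b : List X) (hb : ∀ x ∈ b, ∀ y ∈ b, M.p x = M.p y)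
    (q p : ℕ) (hqp : q ≤ p) :
    dmul M p (dmul M q b) = dmul M q (dmul M (p+1) b) := by
  induction b generalizing q p with
  | nil => simp
  | cons x t ih =>
    have ht : ∀ a ∈ t, ∀ b' ∈ t, M.p a = M.p b' := fun a ha b' hb' =>
      hb a (by simp [ha]) b' (by simp [hb'])
    cases q with
    | zero =>
      cases p with
      | zero =>
        match t with
        | [] => rfl
        | [y] => rfl
        | y :: z :: t' =>
          have hxy : M.p x = M.p y := hb x (by simp) y (by simp)
          have hyz : M.p y = M.p z := hb y (by simp) z (by simp)
          simp [M.mul_assoc x y z hxy hyz]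
      | succ p' =>
        match t with
        | [] => simp
        | [y] => simp
        | y :: z :: t' => simp
    | succ q' =>
      cases p with
      | zero => omega
      | succ p' =>
        have h := ih ht q' p' (by omega)
        simp [h]


/-- delete empty blocks -/
abbrev fNE (L : List (List X)) : List (List X) := L.filter fun b => !b.isEmpty

lemma fNE_append (A B : List (List X)) : fNE (A ++ B) = fNE A ++ fNE B := by
  simp [fNE]

lemma fNE_map (f : X → X) (L : List (List X)) :
    fNE (L.map (List.map f)) = (fNE L).map (List.map f) := by
  induction L with
  | nil => rfl
  | cons b t ih =>
    by_cases hb : b.isEmpty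
    · have hb' : b = [] := List.isEmpty_iff.mp hb
      subst hb'
      simpa [fNE] using ih
    · have hb' : b ≠ [] := fun h => hb (by simp [h])
      simp only [List.map_cons]
      rw [show fNE (List.map f b :: List.map (List.map f) t)
            = List.map f b :: fNE (List.map (List.map f) t) from by
          simp [fNE, List.filter_cons, hb, hb'],
        show fNE (b :: t) = b :: fNE t from by simp [fNE, List.filter_cons, hb, hb']]
      simp [ih]

lemma fNE_fNE (L : List (List X)) : fNE (fNE L) = fNE L := by
  simp [fNE, List.filter_filter]

lemma fNE_eq_self {L : List (List X)} (h : ∀ b ∈ L, b ≠ []) : fNE L = L := by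
  apply List.filter_eq_self.mpr
  intro b hb
  simpa using h b hb

lemma mem_fNE_ne_nil {L : List (List X)} {c : List X} (hc : c ∈ fNE L) : c ≠ [] := by
  have h2 := (List.mem_filter.mp hc).2
  intro h
  subst h
  simp at h2

end Lists

section Gen
variable {X Λ Y : Type*} (M : MGRData X Λ) (S : MGRSet M Y) (d : X)

lemma mgen_def (υ : Y) (L : List (List X)) :
    mgen υ L = Finsupp.single (υ, fNE L) 1 := rfl

lemma mgen_eq_of_fNE {υ : Y} {A B : List (List X)} (h : fNE A = fNE B) :
    mgen υ A = mgen (X := X) υ B := by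
  rw [mgen_def, mgen_def, h]

lemma mgen_fNE_append (υ : Y) (A B : List (List X)) :
    mgen υ (fNE A ++ B) = mgen υ (A ++ B) :=
  mgen_eq_of_fNE (by rw [fNE_append, fNE_append, fNE_fNE])

lemma mgen_map_fNE_append (υ : Y) (f : X → X) (A B : List (List X)) :
    mgen υ ((fNE A).map (List.map f) ++ B) = mgen υ (A.map (List.map f) ++ B) :=
  mgen_eq_of_fNE (by rw [fNE_append, fNE_append, fNE_map, fNE_map, fNE_fNE])

lemma mgen_cons_fNE (υ : Y) (c : List X) (R : List (List X)) :
    mgen υ (c :: fNE R) = mgen υ (c :: R) :=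
  mgen_eq_of_fNE (by
    show fNE ([c] ++ fNE R) = fNE ([c] ++ R)
    rw [fNE_append, fNE_append, fNE_fNE])

/-- the `υ` of the `j`-th face of block `b` -/
def bu (υ : Y) (b : List X) (j : ℕ) : Y := if j = 0 then S.act υ (b.headD d) else υ

/-- what the `j`-th face of block `b` does to earlier blocks -/
def bpre (pre : List (List X)) (b : List X) (j : ℕ) : List (List X) :=
  if j = 0 then pre.map (List.map (fun z => M.op z (b.headD d))) else pre

/-- the new block of the `j`-th face of block `b` -/
def bblk (b : List X) (j : ℕ) : List X := if j = 0 then b.tail else dmul M (j-1) b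

@[simp] lemma bu_zero (υ : Y) (b : List X) : bu M S d υ b 0 = S.act υ (b.headD d) := rfl
@[simp] lemma bu_succ (υ : Y) (b : List X) (j : ℕ) : bu M S d υ b (j+1) = υ := rfl
@[simp] lemma bpre_zero (pre : List (List X)) (b : List X) :
    bpre M d pre b 0 = pre.map (List.map (fun z => M.op z (b.headD d))) := rfl
@[simp] lemma bpre_succ (pre : List (List X)) (b : List X) (j : ℕ) :
    bpre M d pre b (j+1) = pre := rfl
@[simp] lemma bblk_zero (b : List X) : bblk M b 0 = b.tail := rfl
@[simp] lemma bblk_succ (b : List X) (j : ℕ) : bblk M b (j+1) = dmul M j b := rfl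

lemma bblk_length (b : List X) (j : ℕ) (hj : j < b.length + 1) :
    (bblk M b j).length = b.length - 1 := by
  cases j with
  | zero => simp
  | succ j' =>
    simp only [bblk_succ]
    exact dmul_length M b j' (by omega)

/-- normal form of `blockBdry` -/
lemma blockBdry_eq (υ : Y) (pre : List (List X)) (xs : List X)
    (post : List (List X)) (hxs : xs ≠ []) :
    blockBdry M S d υ pre xs post =
      ∑ j ∈ Finset.range (xs.length + 1), (-1 : ℤ) ^ j •
        mgen (bu M S d υ xs j) (bpre M d pre xs j ++ bblk M xs j :: post) := by
  rw [Finset.sum_range_succ']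
  rw [blockBdry, if_neg (by simpa using hxs)]
  rw [add_comm]
  congr 1
  · apply Finset.sum_congr rfl
    intro j hj
    rw [dmul_eq M d xs j (by simpa using hj)]
    simp
  · simp

@[simp] lemma blockBdry_nil (υ : Y) (pre post : List (List X)) :
    blockBdry M S d υ pre [] post = 0 := by
  rw [blockBdry]; simp

end Gen

section LCsec
variable {α β : Type*}

/-- linear extension of a map on generators -/
noncomputable def LC (F : α → (β →₀ ℤ)) : (α →₀ ℤ) →ₗ[ℤ] (β →₀ ℤ) :=
  Finsupp.lsum ℤ fun a => LinearMap.smulRight (LinearMap.id : ℤ →ₗ[ℤ] ℤ) (F a)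

@[simp] lemma LC_single (F : α → (β →₀ ℤ)) (a : α) (c : ℤ) :
    LC F (Finsupp.single a c) = c • F a := by
  simp only [LC, Finsupp.lsum_single, LinearMap.smulRight_apply, LinearMap.id_apply]

lemma LC_apply (F : α → (β →₀ ℤ)) (f : α →₀ ℤ) :
    LC F f = f.sum fun a c => c • F a := rfl

end LCsec

section Maps
variable {X Λ Y : Type*} (M : MGRData X Λ) (S : MGRSet M Y) (d : X)

/-- the boundary as a linear map -/
noncomputable def bmap : ((Y × List (List X)) →₀ ℤ) →ₗ[ℤ] ((Y × List (List X)) →₀ ℤ) :=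
  LC fun q => mbdryGen M S d q.1 q.2

lemma mbdry_eq (f : (Y × List (List X)) →₀ ℤ) :
    mbdry M S d f = bmap M S d f := by
  rw [bmap, LC_apply, mbdry]

/-- the `X`-set structure on `Y × List (List X)` -/
def Sp : MGRSet M (Y × List (List X)) where
  act w x := (S.act w.1 x, w.2.map (List.map (fun z => M.op z x)))
  act_one w l := by
    simp only [S.act_one, M.op_oner]
    exact Prod.ext rfl (by simp)
  act_mul w x₁ x₂ h := by
    refine Prod.ext (S.act_mul _ _ _ h) ?_
    dsimp only
    rw [List.map_map]
    apply List.map_congr_left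
    intro b _
    simp only [Function.comp_apply, List.map_map]
    apply List.map_congr_left
    intro z _
    exact M.op_mulr z x₁ x₂ h
  act_op w x y := by
    refine Prod.ext (S.act_op _ _ _) ?_
    dsimp only
    rw [List.map_map, List.map_map]
    apply List.map_congr_left
    intro b _
    simp only [Function.comp_apply, List.map_map]
    apply List.map_congr_left
    intro z _
    exact M.dist z x y

/-- pushing a `Y × List (List X)`-chain back to a `Y`-chain -/
noncomputable def emap :
    (((Y × List (List X)) × List (List X)) →₀ ℤ) →ₗ[ℤ] ((Y × List (List X)) →₀ ℤ) :=
  Finsupp.lmapDomain ℤ ℤ fun q => (q.1.1, fNE q.1.2 ++ q.2)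

@[simp] lemma emap_single (t : (Y × List (List X)) × List (List X)) (c : ℤ) :
    emap (Finsupp.single t c) = Finsupp.single (t.1.1, fNE t.1.2 ++ t.2) c := by
  simp [emap, Finsupp.lmapDomain_apply, Finsupp.mapDomain_single]

/-- the boundary of the leading block -/
noncomputable def Amap :
    (((Y × List (List X)) × List (List X)) →₀ ℤ) →ₗ[ℤ] ((Y × List (List X)) →₀ ℤ) :=
  LC fun t => blockBdry M S d t.1.1 [] (t.1.2.headD []) t.2

end Maps



section Maps2
variable {X Λ Y : Type*} (M : MGRData X Λ) (S : MGRSet M Y) (d : X)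

lemma emap_blockBdry (υ : Y) (P pre : List (List X)) (xs : List X)
    (post : List (List X)) :
    emap (blockBdry M (Sp M S) d (υ, P) pre xs post)
      = blockBdry M S d υ (fNE P ++ pre) xs post := by
  rcases eq_or_ne xs [] with h | h
  · subst h
    simp only [blockBdry_nil, map_zero]
  · rw [blockBdry_eq M (Sp M S) d _ _ _ _ h, blockBdry_eq M S d _ _ _ _ h, map_sum]
    apply Finset.sum_congr rfl
    intro j _
    rw [map_smul]
    congr 1
    cases j with
    | zero =>
      simp only [bu_zero, bpre_zero, bblk_zero]
      rw [mgen_def, mgen_def, emap_single]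
      have hact : (Sp M S).act (υ, P) (xs.headD d)
          = (S.act υ (xs.headD d), P.map (List.map fun z => M.op z (xs.headD d))) := rfl
      rw [hact]
      congr 1
      refine Prod.ext rfl ?_
      simp [fNE_append, fNE_map, fNE_fNE, List.map_append, List.append_assoc]
    | succ j' =>
      simp only [bu_succ, bpre_succ, bblk_succ]
      rw [mgen_def, mgen_def, emap_single]
      congr 1
      refine Prod.ext rfl ?_
      simp [fNE_append, fNE_map, fNE_fNE, List.append_assoc]

lemma emap_mbdryGen (υ : Y) (P : List (List X)) (L : List (List X)) :
    emap (mbdryGen M (Sp M S) d (υ, P) L)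
      = ∑ i ∈ Finset.range L.length,
          ((-1 : ℤ) ^ (((L.take i).map List.length).sum)) •
            blockBdry M S d υ (fNE P ++ L.take i) (L.getD i []) (L.drop (i + 1)) := by
  rw [mbdryGen, map_sum]
  exact Finset.sum_congr rfl fun i _ => by rw [map_smul, emap_blockBdry]

lemma mbdryGen_cons (υ : Y) (b : List X) (L : List (List X)) :
    mbdryGen M S d υ (fNE [b] ++ L)
      = blockBdry M S d υ [] b L
        + ((-1 : ℤ) ^ b.length) • emap (mbdryGen M (Sp M S) d (υ, [b]) L) := by
  rw [emap_mbdryGen]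
  by_cases hb : b = []
  · subst hb
    have hfb : fNE ([[]] : List (List X)) = [] := rfl
    rw [hfb]
    simp only [blockBdry_nil, List.length_nil, pow_zero, one_smul, zero_add,
      List.nil_append, mbdryGen]
  · have hfb : fNE [b] = [b] := by simp [hb]
    rw [hfb]
    show mbdryGen M S d υ (b :: L) = _
    rw [mbdryGen]
    have hlen : (b :: L).length = L.length + 1 := rfl
    rw [hlen, Finset.sum_range_succ']
    rw [add_comm, Finset.smul_sum]
    congr 1
    · simp
    · apply Finset.sum_congr rfl
      intro i _
      simp only [List.take_succ_cons, List.getD_cons_succ, List.drop_succ_cons,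
        List.map_cons, List.sum_cons, pow_add, smul_smul, List.singleton_append]

lemma mem_support_finset_sum {α β : Type*} {s : Finset β}
    {g : β → (α →₀ ℤ)} {t : α} (ht : t ∈ (∑ i ∈ s, g i).support) :
    ∃ i ∈ s, t ∈ (g i).support := by
  classical
  induction s using Finset.induction_on with
  | empty => simp at ht
  | @insert a s' hx ih =>
    rw [Finset.sum_insert hx] at ht
    rcases Finset.mem_union.mp (Finsupp.support_add ht) with h | h
    · exact ⟨a, Finset.mem_insert_self _ _, h⟩
    · rcases ih h with ⟨i, hi, hti⟩
      exact ⟨i, Finset.mem_insert_of_mem hi, hti⟩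

lemma supp_blockBdry' (υP : Y × List (List X)) (pre : List (List X)) (xs : List X)
    (post : List (List X)) (t : (Y × List (List X)) × List (List X))
    (ht : t ∈ (blockBdry M (Sp M S) d υP pre xs post).support) :
    (t.1.2 = υP.2 ∨ ∃ h : X, t.1.2 = υP.2.map (List.map fun z => M.op z h))
      ∧ ∀ c ∈ t.2, c ≠ [] := by
  rcases eq_or_ne xs [] with h | h
  · subst h; simp at ht
  · rw [blockBdry_eq M (Sp M S) d _ _ _ _ h] at ht
    rcases mem_support_finset_sum ht with ⟨j, _, htj⟩
    have htj' : t ∈ (mgen (bu M (Sp M S) d υP xs j)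
        (bpre M d pre xs j ++ bblk M xs j :: post)).support :=
      Finsupp.support_smul htj
    rw [mgen_def] at htj'
    have h3 := Finsupp.support_single_subset htj'
    simp only [Finset.mem_singleton] at h3
    subst h3
    constructor
    · cases j with
      | zero => exact Or.inr ⟨xs.headD d, rfl⟩
      | succ j' => exact Or.inl rfl
    · intro c hc
      exact mem_fNE_ne_nil hc

lemma supp_mbdryGen' (υP : Y × List (List X)) (L : List (List X))
    (t : (Y × List (List X)) × List (List X))
    (ht : t ∈ (mbdryGen M (Sp M S) d υP L).support) :
    (t.1.2 = υP.2 ∨ ∃ h : X, t.1.2 = υP.2.map (List.map fun z => M.op z h))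
      ∧ ∀ c ∈ t.2, c ≠ [] := by
  rw [mbdryGen] at ht
  rcases mem_support_finset_sum ht with ⟨i, _, hti⟩
  exact supp_blockBdry' M S d υP _ _ _ t (Finsupp.support_smul hti)

lemma bmap_emap (k : ℕ) (g : ((Y × List (List X)) × List (List X)) →₀ ℤ)
    (hg : ∀ t ∈ g.support, ∃ b' : List X, t.1.2 = [b'] ∧ b'.length = k) :
    bmap M S d (emap g)
      = Amap M S d g + ((-1 : ℤ) ^ k) • emap (bmap M (Sp M S) d g) := by
  conv_lhs => rw [← Finsupp.sum_single g]
  conv_rhs => rw [← Finsupp.sum_single g]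
  rw [map_finsuppSum, map_finsuppSum, map_finsuppSum, map_finsuppSum,
    map_finsuppSum, Finsupp.smul_sum]
  rw [Finsupp.sum, Finsupp.sum, Finsupp.sum, ← Finset.sum_add_distrib]
  apply Finset.sum_congr rfl
  intro t htsupp
  obtain ⟨b', hb', hlen⟩ := hg t htsupp
  set c := g t with hc
  rw [emap_single]
  rw [show ((bmap M S d) (Finsupp.single (t.1.1, fNE t.1.2 ++ t.2) c))
      = c • mbdryGen M S d t.1.1 (fNE t.1.2 ++ t.2) from LC_single _ _ _]
  rw [hb', mbdryGen_cons]
  rw [show ((Amap M S d) (Finsupp.single t c))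
      = c • blockBdry M S d t.1.1 [] (t.1.2.headD []) t.2 from LC_single _ _ _]
  rw [show ((bmap M (Sp M S) d) (Finsupp.single t c))
      = c • mbdryGen M (Sp M S) d t.1 t.2 from LC_single _ _ _]
  rw [hb']
  have ht1 : t.1 = (t.1.1, [b']) := Prod.ext rfl hb'
  rw [ht1, hlen]
  rw [smul_add, map_smul]
  rw [smul_comm ((-1 : ℤ) ^ k) c]
  rfl

end Maps2


section Core
variable {X Λ Y : Type*} (M : MGRData X Λ) (S : MGRSet M Y) (d : X)

lemma bpre_nil (b : List X) (j : ℕ) : bpre M d [] b j = [] := by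
  cases j <;> rfl

/-- the simplicial-type commutation identity for the faces of one block -/
lemma CI (υ : Y) (b : List X) (hb : 2 ≤ b.length)
    (hbf : ∀ x ∈ b, ∀ y ∈ b, M.p x = M.p y) (j i : ℕ) (hj : j ≤ i) :
    bu M S d (bu M S d υ b j) (bblk M b j) i
        = bu M S d (bu M S d υ b (i+1)) (bblk M b (i+1)) j
      ∧ bblk M (bblk M b j) i = bblk M (bblk M b (i+1)) j := by
  cases j with
  | zero =>
    cases i with
    | zero =>
      obtain ⟨x, y, t, rfl⟩ : ∃ x y t, b = x :: y :: t := by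
        match b with
        | x :: y :: t => exact ⟨x, y, t, rfl⟩
      have hxy : M.p x = M.p y := hbf x (by simp) y (by simp)
      constructor
      · show S.act (S.act υ x) y = S.act υ (M.mul x y)
        exact (S.act_mul υ x y hxy).symm
      · rfl
    | succ i' =>
      have hbne : b ≠ [] := by intro h; rw [h] at hb; simp at hb
      constructor
      · show S.act υ (b.headD d) = S.act υ ((dmul M (i'+1) b).headD d)
        rw [dmul_headD M d b i' hbne]
      · show bblk M b.tail (i'+1) = bblk M (dmul M (i'+1) b) 0
        show dmul M i' b.tail = (dmul M (i'+1) b).tail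
        exact dmul_tail M b i'
  | succ j' =>
    cases i with
    | zero => omega
    | succ i' =>
      constructor
      · rfl
      · show dmul M i' (dmul M j' b) = dmul M j' (dmul M (i'+1) b)
        exact dmul_dmul M b hbf j' i' (by omega)

/-- `∂̃ ∘ ∂̃ = 0` on a single leading block -/
lemma Dsq (υ : Y) (b : List X) (hbne : b ≠ [])
    (hbf : ∀ x ∈ b, ∀ y ∈ b, M.p x = M.p y) (L : List (List X)) :
    ∑ j ∈ Finset.range (b.length + 1), (-1 : ℤ) ^ j •
      blockBdry M S d (bu M S d υ b j) [] (bblk M b j) L = 0 := by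
  rcases Nat.lt_or_ge b.length 2 with hm | hm
  · have hm1 : b.length = 1 := by
      have := List.length_pos_iff.mpr hbne
      omega
    obtain ⟨x, rfl⟩ : ∃ x, b = [x] := List.length_eq_one_iff.mp hm1
    apply Finset.sum_eq_zero
    intro j hj
    have hj2 : j < 2 := by
      rw [hm1] at hj
      simpa using hj
    have hz : bblk M [x] j = [] := by
      interval_cases j
      · rfl
      · rfl
    rw [hz, blockBdry_nil, smul_zero]
  · have hstep : ∀ j ∈ Finset.range (b.length + 1),
        (-1 : ℤ) ^ j • blockBdry M S d (bu M S d υ b j) [] (bblk M b j) L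
          = ∑ i ∈ Finset.range b.length, (-1 : ℤ) ^ (j + i) •
              mgen (bu M S d (bu M S d υ b j) (bblk M b j) i)
                (bblk M (bblk M b j) i :: L) := by
      intro j hj
      have hlen : (bblk M b j).length = b.length - 1 :=
        bblk_length M b j (Finset.mem_range.mp hj)
      have hne : bblk M b j ≠ [] := by
        intro h
        rw [h] at hlen
        simp at hlen
        omega
      rw [blockBdry_eq M S d _ _ _ _ hne, Finset.smul_sum, hlen,
        show b.length - 1 + 1 = b.length from by omega]
      apply Finset.sum_congr rfl
      intro i _
      rw [bpre_nil, List.nil_append, smul_smul, ← pow_add]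
    rw [Finset.sum_congr rfl hstep]
    rw [← Finset.sum_product' (s := Finset.range (b.length + 1))
      (t := Finset.range b.length)
      (f := fun j i => (-1 : ℤ) ^ (j + i) •
        mgen (bu M S d (bu M S d υ b j) (bblk M b j) i)
          (bblk M (bblk M b j) i :: L))]
    apply Finset.sum_involution
      (g := fun p _ => if p.1 ≤ p.2 then (p.2 + 1, p.1) else (p.2, p.1 - 1))
    case hg₁ =>
      intro p hp
      simp only [Finset.mem_product, Finset.mem_range] at hp
      by_cases hle : p.1 ≤ p.2
      · rw [if_pos hle]
        obtain ⟨hu, hbk⟩ := CI M S d υ b hm hbf p.1 p.2 hle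
        show (-1:ℤ) ^ (p.1 + p.2) • mgen _ _ + (-1:ℤ) ^ (p.2 + 1 + p.1) • mgen _ _ = 0
        rw [← hu, ← hbk,
          show p.2 + 1 + p.1 = (p.1 + p.2) + 1 from by omega, pow_succ]
        simp
      · rw [if_neg hle]
        have hlt : p.2 < p.1 := by omega
        obtain ⟨hu, hbk⟩ := CI M S d υ b hm hbf p.2 (p.1 - 1) (by omega)
        rw [show p.1 - 1 + 1 = p.1 from by omega] at hu hbk
        show (-1:ℤ) ^ (p.1 + p.2) • mgen _ _ + (-1:ℤ) ^ (p.2 + (p.1 - 1)) • mgen _ _ = 0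
        rw [hu, hbk,
          show p.1 + p.2 = (p.2 + (p.1 - 1)) + 1 from by omega, pow_succ]
        simp
    case hg₃ =>
      intro p hp _
      by_cases hle : p.1 ≤ p.2
      · rw [if_pos hle]
        intro h
        have := congrArg Prod.fst h
        simp at this
        omega
      · rw [if_neg hle]
        intro h
        have := congrArg Prod.fst h
        simp at this
        omega
    case g_mem =>
      intro p hp
      simp only [Finset.mem_product, Finset.mem_range] at hp ⊢
      by_cases hle : p.1 ≤ p.2
      · rw [if_pos hle]
        simp only [Finset.mem_product, Finset.mem_range]
        omega
      · rw [if_neg hle]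
        simp only [Finset.mem_product, Finset.mem_range]
        omega
    case hg₄ =>
      intro p hp
      by_cases hle : p.1 ≤ p.2
      · rw [if_pos hle]
        rw [if_neg (by omega)]
        simp
      · rw [if_neg hle]
        rw [if_pos (by omega)]
        have : p.1 - 1 + 1 = p.1 := by
          simp only [Finset.mem_product, Finset.mem_range] at hp
          omega
        exact Prod.ext (by simp [this]) rfl

end Core


section Core2
variable {X Λ Y : Type*} (M : MGRData X Λ) (S : MGRSet M Y) (d : X)

lemma headD_map (f : X → X) (b : List X) (hb : b ≠ []) :
    (b.map f).headD d = f (b.headD d) := by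
  cases b with
  | nil => exact absurd rfl hb
  | cons x t => rfl

/-- the leading block after the `i`-th face of a later block `xs` -/
def bop (b xs : List X) (i : ℕ) : List X :=
  if i = 0 then b.map (fun z => M.op z (xs.headD d)) else b

@[simp] lemma bop_zero (b xs : List X) :
    bop M d b xs 0 = b.map (fun z => M.op z (xs.headD d)) := rfl
@[simp] lemma bop_succ (b xs : List X) (i : ℕ) : bop M d b xs (i+1) = b := rfl

lemma blockBdry_fNE (w : Y) (B : List X) (Q : List (List X)) :
    blockBdry M S d w [] B (fNE Q) = blockBdry M S d w [] B Q := by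
  rcases eq_or_ne B [] with h | h
  · subst h
    rw [blockBdry_nil, blockBdry_nil]
  · rw [blockBdry_eq M S d _ _ _ _ h, blockBdry_eq M S d _ _ _ _ h]
    apply Finset.sum_congr rfl
    intro j _
    rw [bpre_nil, List.nil_append, mgen_cons_fNE, List.nil_append]

lemma Amap_mgen (w : Y × List (List X)) (Q : List (List X)) :
    Amap M S d (mgen w Q) = blockBdry M S d w.1 [] (w.2.headD []) Q := by
  rw [mgen_def]
  rw [show Amap M S d (Finsupp.single (w, fNE Q) 1)
      = (1 : ℤ) • blockBdry M S d w.1 [] (w.2.headD []) (fNE Q) from LC_single _ _ _]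
  rw [one_smul, blockBdry_fNE]

lemma Amap_blockBdry (υ : Y) (b : List X) (hbne : b ≠ [])
    (hbf : ∀ x ∈ b, ∀ y ∈ b, M.p x = M.p y)
    (pre : List (List X)) (xs : List X) (post : List (List X)) :
    Amap M S d (blockBdry M (Sp M S) d (υ, [b]) pre xs post)
      = ∑ j ∈ Finset.range (b.length + 1), (-1 : ℤ) ^ j •
          blockBdry M S d (bu M S d υ b j) (fNE [bblk M b j] ++ pre) xs post := by
  rcases eq_or_ne xs [] with hxs | hxs
  · subst hxs
    rw [blockBdry_nil, map_zero]
    symm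
    apply Finset.sum_eq_zero
    intro j _
    rw [blockBdry_nil, smul_zero]
  · have hbop : ∀ i, bop M d b xs i ≠ [] := by
      intro i
      cases i with
      | zero => simpa using hbne
      | succ i' => simpa using hbne
    have hboplen : ∀ i, (bop M d b xs i).length = b.length := by
      intro i
      cases i with
      | zero => simp
      | succ i' => simp
    rw [blockBdry_eq M (Sp M S) d _ _ _ _ hxs, map_sum]
    have h1 : ∀ i ∈ Finset.range (xs.length + 1),
        Amap M S d ((-1 : ℤ) ^ i • mgen (bu M (Sp M S) d (υ, [b]) xs i)
            (bpre M d pre xs i ++ bblk M xs i :: post))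
          = ∑ j ∈ Finset.range (b.length + 1), (-1 : ℤ) ^ (i + j) •
              mgen (bu M S d (bu M S d υ xs i) (bop M d b xs i) j)
                (bblk M (bop M d b xs i) j ::
                  (bpre M d pre xs i ++ bblk M xs i :: post)) := by
      intro i _
      rw [map_smul, Amap_mgen]
      have hfst : (bu M (Sp M S) d (υ, [b]) xs i).1 = bu M S d υ xs i := by
        cases i <;> rfl
      have hsnd : (bu M (Sp M S) d (υ, [b]) xs i).2.headD [] = bop M d b xs i := by
        cases i <;> rfl
      rw [hfst, hsnd, blockBdry_eq M S d _ _ _ _ (hbop i), hboplen i, Finset.smul_sum]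
      apply Finset.sum_congr rfl
      intro j _
      rw [bpre_nil, List.nil_append, smul_smul, ← pow_add]
    rw [Finset.sum_congr rfl h1]
    have h2 : ∀ j ∈ Finset.range (b.length + 1),
        (-1 : ℤ) ^ j • blockBdry M S d (bu M S d υ b j)
            (fNE [bblk M b j] ++ pre) xs post
          = ∑ i ∈ Finset.range (xs.length + 1), (-1 : ℤ) ^ (i + j) •
              mgen (bu M S d (bu M S d υ xs i) (bop M d b xs i) j)
                (bblk M (bop M d b xs i) j ::
                  (bpre M d pre xs i ++ bblk M xs i :: post)) := by
      intro j _
      rw [blockBdry_eq M S d _ _ _ _ hxs, Finset.smul_sum]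
      apply Finset.sum_congr rfl
      intro i _
      rw [smul_smul, ← pow_add, show j + i = i + j from by omega]
      congr 1
      cases i with
      | zero =>
        cases j with
        | zero =>
          simp only [bu_zero, bpre_zero, bblk_zero, bop_zero]
          rw [List.map_append, List.append_assoc, mgen_map_fNE_append]
          rw [headD_map d (fun z => M.op z (xs.headD d)) b hbne, ← S.act_op]
          rw [← List.map_tail]
          rfl
        | succ j' =>
          simp only [bu_zero, bu_succ, bpre_zero, bblk_succ, bop_zero]
          rw [List.map_append, List.append_assoc, mgen_map_fNE_append]
          rw [dmul_map M (fun z => M.op z (xs.headD d))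
            (fun x y hxy => M.mul_op x y (xs.headD d) hxy) b hbf j']
          rfl
      | succ i' =>
        cases j with
        | zero =>
          simp only [bu_zero, bu_succ, bpre_succ, bblk_zero, bop_succ]
          rw [List.append_assoc, mgen_fNE_append]
          rfl
        | succ j' =>
          simp only [bu_succ, bpre_succ, bblk_succ, bop_succ]
          rw [List.append_assoc, mgen_fNE_append]
          rfl
    rw [Finset.sum_congr rfl h2, Finset.sum_comm]

lemma Amap_mbdryGen (υ : Y) (b : List X) (hbne : b ≠ [])
    (hbf : ∀ x ∈ b, ∀ y ∈ b, M.p x = M.p y) (L : List (List X)) :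
    Amap M S d (mbdryGen M (Sp M S) d (υ, [b]) L)
      = ∑ j ∈ Finset.range (b.length + 1), (-1 : ℤ) ^ j •
          emap (mbdryGen M (Sp M S) d (bu M S d υ b j, [bblk M b j]) L) := by
  rw [mbdryGen, map_sum]
  have h1 : ∀ i ∈ Finset.range L.length,
      Amap M S d (((-1 : ℤ) ^ (((L.take i).map List.length).sum)) •
          blockBdry M (Sp M S) d (υ, [b]) (L.take i) (L.getD i []) (L.drop (i + 1)))
        = ∑ j ∈ Finset.range (b.length + 1),
            ((-1 : ℤ) ^ (((L.take i).map List.length).sum)) • ((-1 : ℤ) ^ j •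
              blockBdry M S d (bu M S d υ b j) (fNE [bblk M b j] ++ L.take i)
                (L.getD i []) (L.drop (i + 1))) := by
    intro i _
    rw [map_smul, Amap_blockBdry M S d υ b hbne hbf, Finset.smul_sum]
  rw [Finset.sum_congr rfl h1, Finset.sum_comm]
  apply Finset.sum_congr rfl
  intro j _
  rw [emap_mbdryGen, Finset.smul_sum]
  apply Finset.sum_congr rfl
  intro i _
  rw [smul_smul, smul_smul, mul_comm]

end Core2


section Key
universe u₁ u₂ u₃
variable {X : Type u₁} {Λ : Type u₂}

lemma key (M : MGRData X Λ) (d : X) (L : List (List X)) :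
    ∀ {Y : Type (max u₁ u₃)} (S : MGRSet M Y) (υ : Y),
      validL M L → bmap M S d (mbdryGen M S d υ L) = 0 := by
  induction L with
  | nil =>
    intro Y S υ _
    rw [mbdryGen]
    simp
  | cons b L ih =>
    intro Y S υ hv
    have hbne : b ≠ [] := (hv b (by simp)).1
    have hbf : ∀ x ∈ b, ∀ y ∈ b, M.p x = M.p y := (hv b (by simp)).2
    have hvL : validL M L := fun c hc => hv c (by simp [hc])
    have hLne : ∀ c ∈ L, c ≠ [] := fun c hc => (hvL c hc).1
    have hfb : fNE [b] = [b] := by simp [hbne]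
    have hdec' : mbdryGen M S d υ (b :: L)
        = blockBdry M S d υ [] b L
          + ((-1 : ℤ) ^ b.length) • emap (mbdryGen M (Sp M S) d (υ, [b]) L) := by
      have h := mbdryGen_cons M S d υ b L
      rwa [hfb, List.singleton_append] at h
    rw [hdec', map_add, map_smul]
    have hsupp : ∀ t ∈ (mbdryGen M (Sp M S) d (υ, [b]) L).support,
        ∃ b' : List X, t.1.2 = [b'] ∧ b'.length = b.length := by
      intro t ht
      obtain ⟨hshape, _⟩ := supp_mbdryGen' M S d (υ, [b]) L t ht
      rcases hshape with h | ⟨h', h⟩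
      · exact ⟨b, h, rfl⟩
      · exact ⟨b.map (fun z => M.op z h'), by simpa using h, by simp⟩
    rw [bmap_emap M S d b.length _ hsupp]
    rw [ih (Sp M S) (υ, [b]) hvL, map_zero, smul_zero, add_zero]
    have hPartI : bmap M S d (blockBdry M S d υ [] b L)
        = (∑ j ∈ Finset.range (b.length + 1), (-1 : ℤ) ^ j •
             blockBdry M S d (bu M S d υ b j) [] (bblk M b j) L)
          + (-1 : ℤ) ^ (b.length - 1) •
            ∑ j ∈ Finset.range (b.length + 1), (-1 : ℤ) ^ j •
              emap (mbdryGen M (Sp M S) d (bu M S d υ b j, [bblk M b j]) L) := by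
      rw [blockBdry_eq M S d _ _ _ _ hbne, map_sum]
      rw [Finset.smul_sum, ← Finset.sum_add_distrib]
      apply Finset.sum_congr rfl
      intro j hj
      rw [bpre_nil, List.nil_append, map_smul]
      have hb1 : bmap M S d (mgen (bu M S d υ b j) (bblk M b j :: L))
          = mbdryGen M S d (bu M S d υ b j) (fNE (bblk M b j :: L)) := by
        rw [mgen_def]
        exact (LC_single _ _ _).trans (one_smul _ _)
      rw [hb1]
      rw [show fNE (bblk M b j :: L) = fNE [bblk M b j] ++ L from by
        rw [← List.singleton_append, fNE_append, fNE_eq_self hLne]]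
      rw [mbdryGen_cons, bblk_length M b j (Finset.mem_range.mp hj)]
      rw [smul_add]
      congr 1
      rw [smul_comm]
    rw [hPartI, Dsq M S d υ b hbne hbf L, zero_add]
    rw [Amap_mbdryGen M S d υ b hbne hbf L]
    rw [← add_smul]
    have hm : 1 ≤ b.length := List.length_pos_iff.mpr hbne
    have h0 : (-1 : ℤ) ^ (b.length - 1) + (-1 : ℤ) ^ b.length = 0 := by
      obtain ⟨k, hk⟩ : ∃ k, b.length = k + 1 := ⟨b.length - 1, by omega⟩
      rw [hk, Nat.add_sub_cancel, pow_succ]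
      ring
    rw [h0, zero_smul]

end Key

section Transfer
variable {X Λ Y : Type*} (M : MGRData X Λ) (S : MGRSet M Y) (d : X)

noncomputable def jmap : ((Y × List (List X)) →₀ ℤ) →ₗ[ℤ]
    (((Y × List (List X)) × List (List X)) →₀ ℤ) :=
  Finsupp.lmapDomain ℤ ℤ fun q => ((q.1, ([] : List (List X))), q.2)

@[simp] lemma jmap_single (q : Y × List (List X)) (c : ℤ) :
    jmap (Finsupp.single q c)
      = Finsupp.single ((q.1, ([] : List (List X))), q.2) c := by
  simp [jmap, Finsupp.lmapDomain_apply, Finsupp.mapDomain_single]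

lemma jmap_blockBdry (υ : Y) (pre : List (List X)) (xs : List X)
    (post : List (List X)) :
    jmap (blockBdry M S d υ pre xs post)
      = blockBdry M (Sp M S) d (υ, []) pre xs post := by
  rcases eq_or_ne xs [] with h | h
  · subst h
    rw [blockBdry_nil, blockBdry_nil, map_zero]
  · rw [blockBdry_eq M S d _ _ _ _ h, blockBdry_eq M (Sp M S) d _ _ _ _ h, map_sum]
    apply Finset.sum_congr rfl
    intro i _
    rw [map_smul]
    congr 1
    rw [mgen_def, mgen_def, jmap_single]
    cases i with
    | zero => rfl
    | succ i' => rfl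

lemma jmap_mbdryGen (υ : Y) (L : List (List X)) :
    jmap (mbdryGen M S d υ L) = mbdryGen M (Sp M S) d (υ, []) L := by
  rw [mbdryGen, mbdryGen, map_sum]
  exact Finset.sum_congr rfl fun i _ => by rw [map_smul, jmap_blockBdry]

lemma jmap_bmap (g : (Y × List (List X)) →₀ ℤ) :
    jmap (bmap M S d g) = bmap M (Sp M S) d (jmap g) := by
  have h : (jmap (X := X) (Y := Y)).comp (bmap M S d)
      = (bmap M (Sp M S) d).comp jmap := by
    apply Finsupp.lhom_ext
    intro q c
    rw [LinearMap.comp_apply, LinearMap.comp_apply, jmap_single]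
    rw [show bmap M S d (Finsupp.single q c)
        = c • mbdryGen M S d q.1 q.2 from LC_single _ _ _]
    rw [show bmap M (Sp M S) d (Finsupp.single ((q.1, ([] : List (List X))), q.2) c)
        = c • mbdryGen M (Sp M S) d (q.1, []) q.2 from LC_single _ _ _]
    rw [map_smul, jmap_mbdryGen]
  exact LinearMap.congr_fun h g

lemma keyY (υ : Y) (L : List (List X)) (hv : validL M L) :
    bmap M S d (mbdryGen M S d υ L) = 0 := by
  have hinj : Function.Injective
      (fun q : Y × List (List X) => ((q.1, ([] : List (List X))), q.2)) := by
    intro a b h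
    simp only [Prod.ext_iff] at h
    exact Prod.ext h.1.1 h.2
  have hj : Function.Injective (jmap (X := X) (Y := Y)) := by
    intro a b h
    exact Finsupp.mapDomain_injective hinj h
  apply hj
  rw [map_zero, jmap_bmap, jmap_mbdryGen]
  exact key M d L (Sp M S) (υ, []) hv

end Transfer

end MGRAux

/-- The MGR chain complex satisfies `∂ ∘ ∂ = 0`. -/
theorem stmt_12 (X Λ Y : Type*) (M : MGRData X Λ) (S : MGRSet M Y) (d : X)
    (f : (Y × List (List X)) →₀ ℤ)
    (hf : ∀ q ∈ f.support, validL M q.2) :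
    mbdry M S d (mbdry M S d f) = 0 := by
  classical
  rw [MGRAux.mbdry_eq, MGRAux.mbdry_eq]
  conv_lhs => rw [← Finsupp.sum_single f]
  rw [map_finsuppSum, map_finsuppSum, Finsupp.sum]
  apply Finset.sum_eq_zero
  intro q hq
  rw [show (MGRAux.bmap M S d) (Finsupp.single q (f q))
      = f q • mbdryGen M S d q.1 q.2 from MGRAux.LC_single _ _ _]
  rw [map_smul, MGRAux.keyY M S d q.1 q.2 (hf q hq), smul_zero]
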